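/- arXiv:math/9909077 — 2 statements merged into one kernel-verified Lean document; each statement's English description precedes it below -/
import Mathlib

section
/- If B₁ and B₂ are normal crystals (for a fixed root datum), then their Kashiwara tensor product B₁ ⊗ B₂ (with the standard tensor product rules for wt, e_i, f_i, ε_i, φ_i) is again a crystal, i.e. satisfies axioms (A), (B), (C) of crystals. -/
namespace CrystalPaper

/-- A pre-crystal: the raw data of a crystal for index set `I` and weight lattice `Λ`. -/
structure PreCrystal (I Λ : Type) [AddCommGroup Λ] where
  B : Type
  wt : B → Λ
  eps : B → I → ℤ
  phi : B → I → ℤ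
  e : I → B → Option B
  f : I → B → Option B

variable {I Λ : Type} [AddCommGroup Λ]

/-- Iterate a partial map `n` times. -/
def iterOpt {β : Type} (g : β → Option β) : ℕ → β → Option β
  | 0, b => some b
  | n + 1, b => (g b).bind (iterOpt g n)

/-- The crystal axioms (A), (B), (C), relative to the simple roots `sr i = αᵢ`
and the pairing `pair μ i = ⟨μ, αᵢ^∨⟩`. -/
def IsCrystal (sr : I → Λ) (pair : Λ → I → ℤ) (C : PreCrystal I Λ) : Prop :=
  (∀ b i, C.phi b i = C.eps b i + pair (C.wt b) i) ∧
  (∀ i b b', C.e i b = some b' →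
      C.wt b' = C.wt b + sr i ∧ C.eps b' i = C.eps b i - 1 ∧ C.phi b' i = C.phi b i + 1) ∧
  (∀ i b b', C.f i b = some b' →
      C.wt b' = C.wt b - sr i ∧ C.eps b' i = C.eps b i + 1 ∧ C.phi b' i = C.phi b i - 1) ∧
  (∀ i b b', C.e i b = some b' ↔ C.f i b' = some b)

/-- Normality: `εᵢ(b) = max {n | eᵢⁿ b ≠ 0}` and `φᵢ(b) = max {n | fᵢⁿ b ≠ 0}`. -/
def IsNormal (C : PreCrystal I Λ) : Prop :=
  ∀ b i,
    (0 ≤ C.eps b i ∧ iterOpt (C.e i) (C.eps b i).toNat b ≠ none ∧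
      iterOpt (C.e i) ((C.eps b i).toNat + 1) b = none) ∧
    (0 ≤ C.phi b i ∧ iterOpt (C.f i) (C.phi b i).toNat b ≠ none ∧
      iterOpt (C.f i) ((C.phi b i).toNat + 1) b = none)

/-- Kashiwara's tensor product of (pre-)crystals. -/
@[reducible] def tensor (C D : PreCrystal I Λ) : PreCrystal I Λ where
  B := C.B × D.B
  wt p := C.wt p.1 + D.wt p.2
  eps p i := max (D.eps p.2 i) (C.eps p.1 i - D.phi p.2 i + D.eps p.2 i)
  phi p i := max (C.phi p.1 i) (D.phi p.2 i - C.eps p.1 i + C.phi p.1 i)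
  e i p :=
    if C.eps p.1 i > D.phi p.2 i then (C.e i p.1).map fun b => (b, p.2)
    else (D.e i p.2).map fun b => (p.1, b)
  f i p :=
    if C.eps p.1 i ≥ D.phi p.2 i then (C.f i p.1).map fun b => (b, p.2)
    else (D.f i p.2).map fun b => (p.1, b)

/-- `B` is generated from `b0` by the operators `fᵢ`. -/
def GeneratedByF (C : PreCrystal I Λ) (b0 : C.B) : Prop :=
  ∀ b : C.B, ∃ w : List I,
    List.foldl (fun (ob : Option C.B) i => ob.bind (C.f i)) (some b0) w = some b

/-- `b0` is a highest weight element of weight `lam` generating `C`. -/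
def IsHighestWeight (C : PreCrystal I Λ) (lam : Λ) (b0 : C.B) : Prop :=
  C.wt b0 = lam ∧ (∀ i, C.e i b0 = none) ∧ GeneratedByF C b0

/-- Dominance order: `μ ≤ lam` iff `lam - μ` is a nonnegative integer
combination of the simple roots. -/
def DomLE (sr : I → Λ) (μ lam : Λ) : Prop :=
  ∃ c : I →₀ ℕ, lam - μ = c.sum fun i n => (n : ℤ) • sr i

/-- Connectedness under the partial operators `eᵢ`, `fᵢ`. -/
def Connected (C : PreCrystal I Λ) : C.B → C.B → Prop :=
  Relation.ReflTransGen fun a b => ∃ i, C.e i a = some b ∨ C.f i a = some b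

end CrystalPaper

open CrystalPaper in
/-- the Kashiwara tensor product of two normal crystals is a crystal. -/
theorem tensor_isCrystal {I Λ : Type} [AddCommGroup Λ] (sr : I → Λ) (pair : Λ → I → ℤ)
    (hpair : ∀ μ ν i, pair (μ + ν) i = pair μ i + pair ν i)
    (C D : PreCrystal I Λ)
    (hC : IsCrystal sr pair C) (hD : IsCrystal sr pair D)
    (hCn : IsNormal C) (hDn : IsNormal D) :
    IsCrystal sr pair (tensor C D) := by
  obtain ⟨hA, hBe, hBf, hEF⟩ := hC
  obtain ⟨hA', hBe', hBf', hEF'⟩ := hD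
  refine ⟨?_, ?_, ?_, ?_⟩
  · intro p i
    have h1 := hA p.1 i
    have h2 := hA' p.2 i
    simp only [tensor, hpair]
    omega
  · intro i p p' h
    simp only [tensor] at h ⊢
    split_ifs at h with hcond
    · rcases Option.map_eq_some_iff.mp h with ⟨b1', hb, rfl⟩
      obtain ⟨hw, he, hp⟩ := hBe i p.1 b1' hb
      refine ⟨by dsimp only; rw [hw]; abel, by dsimp only; omega, by dsimp only; omega⟩
    · push_neg at hcond
      rcases Option.map_eq_some_iff.mp h with ⟨b2', hb, rfl⟩
      obtain ⟨hw, he, hp⟩ := hBe' i p.2 b2' hb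
      refine ⟨by dsimp only; rw [hw]; abel, by dsimp only; omega, by dsimp only; omega⟩
  · intro i p p' h
    simp only [tensor] at h ⊢
    split_ifs at h with hcond
    · rcases Option.map_eq_some_iff.mp h with ⟨b1', hb, rfl⟩
      obtain ⟨hw, he, hp⟩ := hBf i p.1 b1' hb
      refine ⟨by dsimp only; rw [hw]; abel, by dsimp only; omega, by dsimp only; omega⟩
    · push_neg at hcond
      rcases Option.map_eq_some_iff.mp h with ⟨b2', hb, rfl⟩
      obtain ⟨hw, he, hp⟩ := hBf' i p.2 b2' hb
      refine ⟨by dsimp only; rw [hw]; abel, by dsimp only; omega, by dsimp only; omega⟩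
  · intro i p p'
    constructor
    · intro h
      simp only [tensor] at h ⊢
      split_ifs at h with hcond
      · rcases Option.map_eq_some_iff.mp h with ⟨b1', hb, rfl⟩
        obtain ⟨hw, he, hp⟩ := hBe i p.1 b1' hb
        rw [if_pos (by omega : C.eps b1' i ≥ D.phi p.2 i)]
        rw [(hEF i p.1 b1').mp hb]
        rfl
      · push_neg at hcond
        rcases Option.map_eq_some_iff.mp h with ⟨b2', hb, rfl⟩
        obtain ⟨hw, he, hp⟩ := hBe' i p.2 b2' hb
        rw [if_neg (by omega : ¬ C.eps p.1 i ≥ D.phi b2' i)]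
        rw [(hEF' i p.2 b2').mp hb]
        rfl
    · intro h
      simp only [tensor] at h ⊢
      split_ifs at h with hcond
      · rcases Option.map_eq_some_iff.mp h with ⟨b1, hb, hp⟩
        subst hp
        obtain ⟨hw, he, hp⟩ := hBf i p'.1 b1 hb
        rw [if_pos (by omega : C.eps b1 i > D.phi p'.2 i)]
        rw [(hEF i b1 p'.1).mpr hb]
        rfl
      · push_neg at hcond
        rcases Option.map_eq_some_iff.mp h with ⟨b2, hb, hp⟩
        subst hp
        obtain ⟨hw, he, hp⟩ := hBf' i p'.2 b2 hb
        rw [if_neg (by omega : ¬ C.eps p'.1 i > D.phi b2 i)]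
        rw [(hEF' i b2 p'.2).mpr hb]
        rfl
end

section
/- For the rank-1 root datum (Λ = ℤ, α = 2): in B(l₁) ⊗ B(l₂), the element m₁ ⊗ m₂ lies in the connected component (under e, f) whose highest weight element is l₁ ⊗ (n − l₁), where n = max{l₁ − m₂, m₁ + l₂}. Equivalently, applying e repeatedly to m₁ ⊗ m₂ until reaching an element killed by e yields l₁ ⊗ (n−l₁) with n = max{l₁ − m₂, m₁ + l₂}. -/
namespace CrystalPaper

/-- The sl₂-crystal B(l) on the set {l, l-2, ..., -l}, for the rank-1 root datum
with weight lattice ℤ, simple root α = 2 and pairing ⟨m, α^∨⟩ = m. -/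
def Bsl2 (l : ℤ) : PreCrystal Unit ℤ where
  B := { m : ℤ // -l ≤ m ∧ m ≤ l ∧ (l - m) % 2 = 0 }
  wt b := b.1
  eps b _ := (l - b.1) / 2
  phi b _ := (l + b.1) / 2
  e _ b :=
    if h : b.1 < l then some ⟨b.1 + 2, by obtain ⟨h1, h2, h3⟩ := b.2; omega⟩ else none
  f _ b :=
    if h : -l < b.1 then some ⟨b.1 - 2, by obtain ⟨h1, h2, h3⟩ := b.2; omega⟩ else none

/-- Disjoint union of a family of (pre-)crystals. -/
def sigmaCrystal {I Λ : Type} [AddCommGroup Λ] {ι : Type} (F : ι → PreCrystal I Λ) :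
    PreCrystal I Λ where
  B := Σ j : ι, (F j).B
  wt p := (F p.1).wt p.2
  eps p i := (F p.1).eps p.2 i
  phi p i := (F p.1).phi p.2 i
  e i p := ((F p.1).e i p.2).map fun b => ⟨p.1, b⟩
  f i p := ((F p.1).f i p.2).map fun b => ⟨p.1, b⟩

end CrystalPaper


namespace CrystalPaper

theorem step_lemma (l1 l2 : ℤ) (_h1 : 0 ≤ l1) (h2 : 0 ≤ l2)
    (p : (tensor (Bsl2 l1) (Bsl2 l2)).B) :
    ((tensor (Bsl2 l1) (Bsl2 l2)).e () p = none ∧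
      (tensor (Bsl2 l1) (Bsl2 l2)).wt p = max (l1 - p.2.1) (p.1.1 + l2)) ∨
    ∃ q, (tensor (Bsl2 l1) (Bsl2 l2)).e () p = some q ∧
      max (l1 - q.2.1) (q.1.1 + l2) = max (l1 - p.2.1) (p.1.1 + l2) ∧
      (l1 - q.1.1 + (l2 - q.2.1)).toNat < (l1 - p.1.1 + (l2 - p.2.1)).toNat := by
  obtain ⟨⟨m1, a1, a2, a3⟩, ⟨m2, c1, c2, c3⟩⟩ := p
  simp only [tensor, Bsl2]
  by_cases hc : (l1 - m1) / 2 > (l2 + m2) / 2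
  · right
    have hm1 : m1 < l1 := by omega
    refine ⟨⟨⟨m1 + 2, by omega⟩, ⟨m2, c1, c2, c3⟩⟩, ?_, ?_, ?_⟩
    · rw [if_pos hc, dif_pos hm1]; rfl
    · show max (l1 - m2) ((m1 + 2) + l2) = max (l1 - m2) (m1 + l2); omega
    · show (l1 - (m1 + 2) + (l2 - m2)).toNat < (l1 - m1 + (l2 - m2)).toNat; omega
  · rw [if_neg hc]
    by_cases hm2 : m2 < l2
    · right
      refine ⟨⟨⟨m1, a1, a2, a3⟩, ⟨m2 + 2, by omega⟩⟩, ?_, ?_, ?_⟩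
      · rw [dif_pos hm2]; rfl
      · show max (l1 - (m2 + 2)) (m1 + l2) = max (l1 - m2) (m1 + l2); omega
      · show (l1 - m1 + (l2 - (m2 + 2))).toNat < (l1 - m1 + (l2 - m2)).toNat; omega
    · left
      rw [dif_neg hm2]
      refine ⟨rfl, ?_⟩
      omega

theorem main_aux (l1 l2 : ℤ) (h1 : 0 ≤ l1) (h2 : 0 ≤ l2) :
    ∀ (N : ℕ) (p : (tensor (Bsl2 l1) (Bsl2 l2)).B),
      (l1 - p.1.1 + (l2 - p.2.1)).toNat ≤ N →
      ∃ (k : ℕ) (q : (tensor (Bsl2 l1) (Bsl2 l2)).B),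
        iterOpt ((tensor (Bsl2 l1) (Bsl2 l2)).e ()) k p = some q ∧
        ((tensor (Bsl2 l1) (Bsl2 l2)).e () q = none) ∧
        Connected (tensor (Bsl2 l1) (Bsl2 l2)) p q ∧
        (tensor (Bsl2 l1) (Bsl2 l2)).wt q = max (l1 - p.2.1) (p.1.1 + l2) := by
  intro N
  induction N with
  | zero =>
    intro p hp
    rcases step_lemma l1 l2 h1 h2 p with ⟨hn, hw⟩ | ⟨q, hq, _, hlt⟩
    · exact ⟨0, p, rfl, hn, Relation.ReflTransGen.refl, hw⟩
    · omega
  | succ N ih =>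
    intro p hp
    rcases step_lemma l1 l2 h1 h2 p with ⟨hn, hw⟩ | ⟨q, hq, hmax, hlt⟩
    · exact ⟨0, p, rfl, hn, Relation.ReflTransGen.refl, hw⟩
    · obtain ⟨k, r, hiter, hnone, hconn, hwt⟩ := ih q (by omega)
      refine ⟨k + 1, r, ?_, hnone, ?_, by rw [hwt, hmax]⟩
      · show ((tensor (Bsl2 l1) (Bsl2 l2)).e () p).bind
            (iterOpt ((tensor (Bsl2 l1) (Bsl2 l2)).e ()) k) = some r
        rw [hq, Option.bind_some]
        exact hiter
      · exact Relation.ReflTransGen.head ⟨(), Or.inl hq⟩ hconn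

end CrystalPaper

open CrystalPaper in
/-- in B(l₁) ⊗ B(l₂), applying e repeatedly to m₁ ⊗ m₂ until reaching an
element killed by e yields the highest weight element of its connected component, whose
weight is n = max(l₁ - m₂, m₁ + l₂) (the weight of l₁ ⊗ (n - l₁)). -/
theorem Bsl2_tensor_component (l1 l2 : ℤ) (h1 : 0 ≤ l1) (h2 : 0 ≤ l2)
    (p : (tensor (Bsl2 l1) (Bsl2 l2)).B) :
    ∃ (k : ℕ) (q : (tensor (Bsl2 l1) (Bsl2 l2)).B),
      iterOpt ((tensor (Bsl2 l1) (Bsl2 l2)).e ()) k p = some q ∧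
      (∀ i, (tensor (Bsl2 l1) (Bsl2 l2)).e i q = none) ∧
      Connected (tensor (Bsl2 l1) (Bsl2 l2)) p q ∧
      (tensor (Bsl2 l1) (Bsl2 l2)).wt q = max (l1 - p.2.1) (p.1.1 + l2) := by
  obtain ⟨k, q, hk, hn, hc, hw⟩ := main_aux l1 l2 h1 h2 _ p le_rfl
  exact ⟨k, q, hk, fun i => by cases i; exact hn, hc, hw⟩
end
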